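/- The Taylor expansion of f(x,y) = -2Λ(x+y) + 2Λ(y) + Λ(x) around (π/2, π/4) is f(π/2 + x, π/4 + y) = f(π/2, π/4) - (x² + 2xy + 2y²) + O(|x|³ + |y|³) as (x,y) → (0,0). -/

import Mathlib

open Real Asymptotics MeasureTheory intervalIntegral

noncomputable def lob (θ : ℝ) : ℝ := -∫ t in (0:ℝ)..θ, Real.log |2 * Real.sin t|


lemma int_sing : IntervalIntegrable (fun t => Real.log (2 * Real.sin t)) volume 0 (1/2) := by
  have hg : IntervalIntegrable (fun t : ℝ => 2 * t ^ (-(1/2) : ℝ)) volume 0 (1/2) :=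
    (intervalIntegrable_rpow' (by norm_num)).const_mul 2
  refine hg.mono_fun ?_ ?_
  · exact (Real.measurable_log.comp (measurable_const.mul Real.measurable_sin)).aestronglyMeasurable
  · rw [Set.uIoc_of_le (by norm_num : (0:ℝ) ≤ 1/2)]
    refine (ae_restrict_iff' measurableSet_Ioc).2 (Filter.Eventually.of_forall ?_)
    rintro t ⟨ht0, ht⟩
    have hsl : Real.sin t < t := Real.sin_lt ht0
    have hsg : t / 2 ≤ Real.sin t := by
      have := Real.mul_le_sin ht0.le (by linarith [Real.pi_gt_three] : t ≤ π/2)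
      have h2 : 1/2 ≤ 2/π := by
        rw [div_le_div_iff₀ (by norm_num) Real.pi_pos]
        linarith [Real.pi_lt_d2]
      nlinarith [Real.pi_pos]
    have hspos : 0 < Real.sin t := by linarith
    have h1 : Real.log (2 * Real.sin t) ≤ 0 := by
      apply Real.log_nonpos (by positivity); linarith
    have h2 : Real.log t ≤ Real.log (2 * Real.sin t) :=
      Real.log_le_log ht0 (by linarith)
    have hrp : (0:ℝ) < t ^ (-(1/2) : ℝ) := Real.rpow_pos_of_pos ht0 _
    have hlog : -Real.log t ≤ 2 * t ^ (-(1/2) : ℝ) := by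
      have := Real.log_le_sub_one_of_pos hrp
      rw [Real.log_rpow ht0] at this
      linarith
    simp only []
    rw [Real.norm_eq_abs, Real.norm_eq_abs, abs_of_nonpos h1, abs_of_pos (by positivity)]
    linarith


lemma lob_eq (θ : ℝ) : lob θ = -∫ t in (0:ℝ)..θ, Real.log (2 * Real.sin t) := by
  simp only [lob, Real.log_abs]

lemma sin_pos_of_mem {a b t : ℝ} (ha : 1/2 ≤ a) (hb : 1/2 ≤ b) (ha' : a < π) (hb' : b < π)
    (ht : t ∈ Set.uIcc a b) : 0 < Real.sin t := by
  rcases Set.mem_uIcc.1 ht with h | h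
  · exact Real.sin_pos_of_pos_of_lt_pi (by linarith) (by linarith)
  · exact Real.sin_pos_of_pos_of_lt_pi (by linarith) (by linarith)

lemma contOn {a b : ℝ} (h : ∀ t ∈ Set.uIcc a b, 0 < Real.sin t) :
    ContinuousOn (fun t => Real.log (2 * Real.sin t)) (Set.uIcc a b) :=
  ContinuousOn.log (continuous_const.mul Real.continuous_sin).continuousOn
    (fun t ht => by have := h t ht; positivity)

lemma intOn {a b : ℝ} (ha : 1/2 ≤ a) (hb : 1/2 ≤ b) (ha' : a < π) (hb' : b < π) :
    IntervalIntegrable (fun t => Real.log (2 * Real.sin t)) volume a b :=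
  (contOn (fun t ht => sin_pos_of_mem ha hb ha' hb' ht)).intervalIntegrable



lemma lob_diff {a b : ℝ} (ha : 1/2 ≤ a) (hb : 1/2 ≤ b) (ha' : a < π) (hb' : b < π) :
    lob b - lob a = -∫ t in a..b, Real.log (2 * Real.sin t) := by
  rw [lob_eq, lob_eq]
  have h0a : IntervalIntegrable (fun t => Real.log (2 * Real.sin t)) volume 0 a :=
    int_sing.trans (intOn (le_refl _) ha (by linarith [Real.pi_gt_three]) ha')
  have hab := intOn ha hb ha' hb'
  rw [← integral_add_adjacent_intervals h0a hab]
  ring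





lemma abs_sub_le_of_uIoc {θ₀ t s : ℝ} (hs : s ∈ Set.uIoc θ₀ t) : |s - θ₀| ≤ |t - θ₀| := by
  rcases le_total θ₀ t with h | h
  · rw [Set.uIoc_of_le h] at hs
    rw [abs_of_nonneg (by linarith [hs.1.le]), abs_of_nonneg (by linarith)]
    linarith [hs.2]
  · rw [Set.uIoc_of_ge h] at hs
    rw [abs_of_nonpos (by linarith [hs.2]), abs_of_nonpos (by linarith)]
    linarith [hs.1.le]

lemma key {θ₀ : ℝ} (h1 : 1/2 < θ₀) (h2 : θ₀ < π) :
    ∃ δ > 0, ∃ K ≥ (0:ℝ), ∀ h : ℝ, |h| ≤ δ →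
      |lob (θ₀ + h) - lob θ₀ + Real.log (2 * Real.sin θ₀) * h
        + (Real.cos θ₀ / Real.sin θ₀) * h ^ 2 / 2| ≤ K * |h| ^ 3 := by
  set δ : ℝ := min ((θ₀ - 1/2)/2) ((π - θ₀)/2) with hδdef
  have hδpos : 0 < δ := lt_min (by linarith) (by linarith)
  have hδ1 : δ ≤ (θ₀ - 1/2)/2 := min_le_left _ _
  have hδ2 : δ ≤ (π - θ₀)/2 := min_le_right _ _
  set I : Set ℝ := Set.Icc (θ₀ - δ) (θ₀ + δ) with hIdef
  have hIle : θ₀ - δ ≤ θ₀ + δ := by linarith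
  have hθ₀I : θ₀ ∈ I := ⟨by linarith, by linarith⟩
  have hsinpos : ∀ t ∈ I, 0 < Real.sin t := by
    rintro t ⟨htl, htr⟩
    exact Real.sin_pos_of_pos_of_lt_pi (by linarith) (by linarith)
  -- minimum of sin on I
  obtain ⟨c, hcI, hc⟩ := isCompact_Icc.exists_isMinOn (Set.nonempty_Icc.2 hIle)
    Real.continuous_sin.continuousOn
  have hm : 0 < Real.sin c := hsinpos c hcI
  set M : ℝ := 1 / Real.sin c ^ 2 with hMdef
  have hMpos : 0 < M := by positivity
  -- cot is M-Lipschitz on I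
  have hcot : ∀ s ∈ I, |Real.cos s / Real.sin s - Real.cos θ₀ / Real.sin θ₀| ≤ M * |s - θ₀| := by
    have hderiv : ∀ t ∈ I, HasDerivWithinAt (fun u => Real.cos u / Real.sin u)
        (-(1 / Real.sin t ^ 2)) I t := by
      intro t ht
      have hst := hsinpos t ht
      have := (Real.hasDerivAt_cos t).div (Real.hasDerivAt_sin t) (ne_of_gt hst)
      have heq : (-Real.sin t * Real.sin t - Real.cos t * Real.cos t) / Real.sin t ^ 2
          = -(1 / Real.sin t ^ 2) := by
        have hpyth := Real.sin_sq_add_cos_sq t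
        field_simp
        nlinarith
      rw [heq] at this
      exact this.hasDerivWithinAt
    have hbound : ∀ t ∈ I, ‖-(1 / Real.sin t ^ 2)‖ ≤ M := by
      intro t ht
      have hst := hsinpos t ht
      have hle : Real.sin c ≤ Real.sin t := hc ht
      rw [norm_neg, Real.norm_eq_abs, abs_of_pos (by positivity), hMdef]
      gcongr
    intro s hs
    have := (convex_Icc _ _).norm_image_sub_le_of_norm_hasDerivWithin_le hderiv hbound hθ₀I hs
    simpa [Real.norm_eq_abs] using this
  -- quadratic bound on φ
  have hφ : ∀ t ∈ I, |Real.log (2 * Real.sin t) - Real.log (2 * Real.sin θ₀)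
      - (Real.cos θ₀ / Real.sin θ₀) * (t - θ₀)| ≤ M * |t - θ₀| ^ 2 := by
    intro t ht
    have huIcc : Set.uIcc θ₀ t ⊆ I := by
      rw [hIdef, ← Set.uIcc_of_le hIle]
      exact Set.uIcc_subset_uIcc (by rw [Set.uIcc_of_le hIle]; exact hθ₀I)
        (by rw [Set.uIcc_of_le hIle]; exact ht)
    have hFTC : ∫ s in θ₀..t, (Real.cos s / Real.sin s - Real.cos θ₀ / Real.sin θ₀)
        = (Real.log (2 * Real.sin t) - (Real.cos θ₀ / Real.sin θ₀) * t)
          - (Real.log (2 * Real.sin θ₀) - (Real.cos θ₀ / Real.sin θ₀) * θ₀) := by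
      apply integral_eq_sub_of_hasDerivAt
      · intro u hu
        have hsu := hsinpos u (huIcc hu)
        have hlog : HasDerivAt (fun v => Real.log (2 * Real.sin v))
            (Real.cos u / Real.sin u) u := by
          have := ((Real.hasDerivAt_sin u).const_mul 2).log (by positivity)
          convert this using 1
          field_simp
        exact hlog.sub (((hasDerivAt_id' u).const_mul (Real.cos θ₀ / Real.sin θ₀)).congr_deriv (mul_one _))
      · apply ContinuousOn.intervalIntegrable
        apply ContinuousOn.sub _ continuousOn_const
        exact ContinuousOn.div Real.continuous_cos.continuousOn Real.continuous_sin.continuousOn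
          (fun u hu => ne_of_gt (hsinpos u (huIcc hu)))
    have hbd : |∫ s in θ₀..t, (Real.cos s / Real.sin s - Real.cos θ₀ / Real.sin θ₀)|
        ≤ M * |t - θ₀| * |t - θ₀| := by
      have := intervalIntegral.norm_integral_le_of_norm_le_const (C := M * |t - θ₀|)
        (f := fun s => Real.cos s / Real.sin s - Real.cos θ₀ / Real.sin θ₀)
        (a := θ₀) (b := t) ?_
      · simpa [Real.norm_eq_abs] using this
      · intro s hs
        have hsI : s ∈ I := by
          have : Set.uIoc θ₀ t ⊆ Set.uIcc θ₀ t := Set.Ioc_subset_Icc_self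
          exact huIcc (this hs)
        calc ‖Real.cos s / Real.sin s - Real.cos θ₀ / Real.sin θ₀‖ ≤ M * |s - θ₀| := hcot s hsI
        _ ≤ M * |t - θ₀| := mul_le_mul_of_nonneg_left (abs_sub_le_of_uIoc hs) hMpos.le
    rw [hFTC] at hbd
    calc |Real.log (2 * Real.sin t) - Real.log (2 * Real.sin θ₀)
        - Real.cos θ₀ / Real.sin θ₀ * (t - θ₀)| = |(Real.log (2 * Real.sin t)
        - Real.cos θ₀ / Real.sin θ₀ * t) - (Real.log (2 * Real.sin θ₀)
        - Real.cos θ₀ / Real.sin θ₀ * θ₀)| := by ring_nf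
      _ ≤ M * |t - θ₀| * |t - θ₀| := hbd
      _ = M * |t - θ₀| ^ 2 := by ring
  refine ⟨δ, hδpos, M, hMpos.le, ?_⟩
  intro h hh
  obtain ⟨hh1, hh2⟩ := abs_le.1 hh
  have hmem : θ₀ + h ∈ I := ⟨by linarith, by linarith⟩
  have huIcc : Set.uIcc θ₀ (θ₀ + h) ⊆ I := by
    rw [hIdef, ← Set.uIcc_of_le hIle]
    exact Set.uIcc_subset_uIcc (by rw [Set.uIcc_of_le hIle]; exact hθ₀I)
      (by rw [Set.uIcc_of_le hIle]; exact hmem)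
  have hLcont : ContinuousOn (fun t => Real.log (2 * Real.sin t)) (Set.uIcc θ₀ (θ₀ + h)) :=
    ContinuousOn.log (continuous_const.mul Real.continuous_sin).continuousOn
      (fun t ht => by have := hsinpos t (huIcc ht); positivity)
  have hLint : IntervalIntegrable (fun t => Real.log (2 * Real.sin t)) volume θ₀ (θ₀ + h) :=
    hLcont.intervalIntegrable
  have hAcont : ContinuousOn (fun t => Real.log (2 * Real.sin θ₀)
      + Real.cos θ₀ / Real.sin θ₀ * (t - θ₀)) (Set.uIcc θ₀ (θ₀ + h)) := by fun_prop
  have hAint : IntervalIntegrable (fun t => Real.log (2 * Real.sin θ₀)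
      + Real.cos θ₀ / Real.sin θ₀ * (t - θ₀)) volume θ₀ (θ₀ + h) :=
    hAcont.intervalIntegrable
  have haff : ∫ t in θ₀..(θ₀ + h), (Real.log (2 * Real.sin θ₀)
      + Real.cos θ₀ / Real.sin θ₀ * (t - θ₀))
      = Real.log (2 * Real.sin θ₀) * h + Real.cos θ₀ / Real.sin θ₀ * h ^ 2 / 2 := by
    have := integral_eq_sub_of_hasDerivAt (a := θ₀) (b := θ₀ + h)
      (f := fun t => Real.log (2 * Real.sin θ₀) * t
        + Real.cos θ₀ / Real.sin θ₀ * ((t - θ₀) ^ 2 / 2))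
      (f' := fun t => Real.log (2 * Real.sin θ₀)
        + Real.cos θ₀ / Real.sin θ₀ * (t - θ₀)) ?_ hAint
    · rw [this]; ring
    · intro u hu
      have h1 : HasDerivAt (fun t : ℝ => Real.log (2 * Real.sin θ₀) * t)
          (Real.log (2 * Real.sin θ₀)) u := by
        simpa using (hasDerivAt_id u).const_mul (Real.log (2 * Real.sin θ₀))
      have h2 : HasDerivAt (fun t : ℝ => (t - θ₀) ^ 2 / 2) (u - θ₀) u := by
        have := (((hasDerivAt_id u).sub_const θ₀).pow 2).div_const 2
        simpa using this
      exact h1.add (h2.const_mul (Real.cos θ₀ / Real.sin θ₀))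
  have hdiff : lob (θ₀ + h) - lob θ₀ = -∫ t in θ₀..(θ₀ + h), Real.log (2 * Real.sin t) :=
    lob_diff (by linarith) (by linarith) (by linarith) (by linarith)
  have hJ : lob (θ₀ + h) - lob θ₀ + Real.log (2 * Real.sin θ₀) * h
      + Real.cos θ₀ / Real.sin θ₀ * h ^ 2 / 2
      = -∫ t in θ₀..(θ₀ + h), (Real.log (2 * Real.sin t) - (Real.log (2 * Real.sin θ₀)
        + Real.cos θ₀ / Real.sin θ₀ * (t - θ₀))) := by
    rw [intervalIntegral.integral_sub hLint hAint, haff, hdiff]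
    ring
  rw [hJ, abs_neg]
  have hbd := intervalIntegral.norm_integral_le_of_norm_le_const (C := M * |h| ^ 2)
    (f := fun t => Real.log (2 * Real.sin t) - (Real.log (2 * Real.sin θ₀)
      + Real.cos θ₀ / Real.sin θ₀ * (t - θ₀))) (a := θ₀) (b := θ₀ + h) ?_
  · rw [Real.norm_eq_abs] at hbd
    calc |∫ t in θ₀..(θ₀ + h), (Real.log (2 * Real.sin t) - (Real.log (2 * Real.sin θ₀)
        + Real.cos θ₀ / Real.sin θ₀ * (t - θ₀)))| ≤ M * |h| ^ 2 * |θ₀ + h - θ₀| := hbd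
      _ = M * |h| ^ 3 := by rw [add_sub_cancel_left]; ring
  · intro t ht
    have htI : t ∈ I := huIcc (Set.Ioc_subset_Icc_self ht)
    have h1 := hφ t htI
    have h2 : |t - θ₀| ≤ |h| := by
      have := abs_sub_le_of_uIoc (θ₀ := θ₀) (t := θ₀ + h) ht
      rwa [add_sub_cancel_left] at this
    calc ‖Real.log (2 * Real.sin t) - (Real.log (2 * Real.sin θ₀)
        + Real.cos θ₀ / Real.sin θ₀ * (t - θ₀))‖
        = |Real.log (2 * Real.sin t) - Real.log (2 * Real.sin θ₀)
          - Real.cos θ₀ / Real.sin θ₀ * (t - θ₀)| := by rw [Real.norm_eq_abs]; ring_nf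
      _ ≤ M * |t - θ₀| ^ 2 := h1
      _ ≤ M * |h| ^ 2 := by
          have : |t - θ₀| ^ 2 ≤ |h| ^ 2 := by nlinarith [abs_nonneg (t - θ₀), abs_nonneg h]
          exact mul_le_mul_of_nonneg_left this hMpos.le

noncomputable def f (x y : ℝ) : ℝ := -2 * lob (x + y) + 2 * lob y + lob x

lemma cube_bound (x y : ℝ) : |x + y| ^ 3 ≤ 4 * (|x| ^ 3 + |y| ^ 3) := by
  have h1 : |x + y| ≤ |x| + |y| := abs_add_le x y
  have h2 : |x + y| ^ 3 ≤ (|x| + |y|) ^ 3 := by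
    apply pow_le_pow_left₀ (abs_nonneg _) h1
  nlinarith [abs_nonneg x, abs_nonneg y, sq_nonneg (|x| - |y|), mul_nonneg (sq_nonneg (|x| - |y|)) (add_nonneg (abs_nonneg x) (abs_nonneg y))]

set_option maxHeartbeats 1000000 in
theorem taylor_expansion :
    (fun p : ℝ × ℝ =>
        f (π / 2 + p.1) (π / 4 + p.2) - f (π / 2) (π / 4)
          + (p.1 ^ 2 + 2 * p.1 * p.2 + 2 * p.2 ^ 2)) =O[nhds (0 : ℝ × ℝ)]
      fun p : ℝ × ℝ => |p.1| ^ 3 + |p.2| ^ 3 := by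
  have hπ := Real.pi_gt_three
  have hs2 : Real.sqrt 2 / 2 ≠ 0 := by positivity
  have h34 : (3:ℝ) * π / 4 = π - π / 4 := by ring
  have hsin34 : Real.sin (3 * π / 4) = Real.sqrt 2 / 2 := by
    rw [h34, Real.sin_pi_sub, Real.sin_pi_div_four]
  have hcos34 : Real.cos (3 * π / 4) = -(Real.sqrt 2 / 2) := by
    rw [h34, Real.cos_pi_sub, Real.cos_pi_div_four]
  have hlog34 : Real.log (2 * Real.sin (3 * π / 4)) = Real.log 2 / 2 := by
    rw [hsin34]
    have : (2:ℝ) * (Real.sqrt 2 / 2) = Real.sqrt 2 := by ring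
    rw [this, Real.log_sqrt (by norm_num)]
  have hcot34 : Real.cos (3 * π / 4) / Real.sin (3 * π / 4) = -1 := by
    rw [hsin34, hcos34, neg_div, div_self hs2]
  have hlog14 : Real.log (2 * Real.sin (π / 4)) = Real.log 2 / 2 := by
    rw [Real.sin_pi_div_four]
    have : (2:ℝ) * (Real.sqrt 2 / 2) = Real.sqrt 2 := by ring
    rw [this, Real.log_sqrt (by norm_num)]
  have hcot14 : Real.cos (π / 4) / Real.sin (π / 4) = 1 := by
    rw [Real.sin_pi_div_four, Real.cos_pi_div_four, div_self hs2]
  have hlog12 : Real.log (2 * Real.sin (π / 2)) = Real.log 2 := by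
    rw [Real.sin_pi_div_two, mul_one]
  have hcot12 : Real.cos (π / 2) / Real.sin (π / 2) = 0 := by
    rw [Real.cos_pi_div_two, zero_div]
  obtain ⟨δ₁, hδ₁, K₁, hK₁, hA⟩ := key (θ₀ := 3 * π / 4) (by linarith) (by linarith)
  obtain ⟨δ₂, hδ₂, K₂, hK₂, hB⟩ := key (θ₀ := π / 4) (by linarith) (by linarith)
  obtain ⟨δ₃, hδ₃, K₃, hK₃, hC⟩ := key (θ₀ := π / 2) (by linarith) (by linarith)
  rw [hlog34, hcot34] at hA
  rw [hlog14, hcot14] at hB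
  rw [hlog12, hcot12] at hC
  -- algebraic identity
  have hid : ∀ x y : ℝ, f (π / 2 + x) (π / 4 + y) - f (π / 2) (π / 4)
      + (x ^ 2 + 2 * x * y + 2 * y ^ 2)
      = -2 * (lob (3 * π / 4 + (x + y)) - lob (3 * π / 4) + Real.log 2 / 2 * (x + y)
          + (-1) * (x + y) ^ 2 / 2)
        + 2 * (lob (π / 4 + y) - lob (π / 4) + Real.log 2 / 2 * y + 1 * y ^ 2 / 2)
        + (lob (π / 2 + x) - lob (π / 2) + Real.log 2 * x + 0 * x ^ 2 / 2) := by
    intro x y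
    simp only [f]
    have e1 : π / 2 + x + (π / 4 + y) = 3 * π / 4 + (x + y) := by ring
    have e2 : π / 2 + π / 4 = 3 * π / 4 + 0 := by ring
    rw [e1, e2]
    have e3 : (3:ℝ) * π / 4 + 0 = 3 * π / 4 := by ring
    rw [e3]
    ring
  rw [Asymptotics.isBigO_iff]
  refine ⟨2 * K₁ * 4 + 2 * K₂ + K₃, ?_⟩
  set ε : ℝ := min (δ₁ / 2) (min δ₂ δ₃) with hεdef
  have hεpos : 0 < ε := lt_min (by linarith) (lt_min hδ₂ hδ₃)
  have hev : ∀ᶠ p : ℝ × ℝ in nhds 0, |p.1| < ε ∧ |p.2| < ε := by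
    have t1 : Filter.Tendsto (fun p : ℝ × ℝ => p.1) (nhds 0) (nhds 0) :=
      continuous_fst.tendsto (0 : ℝ × ℝ)
    have t2 : Filter.Tendsto (fun p : ℝ × ℝ => p.2) (nhds 0) (nhds 0) :=
      continuous_snd.tendsto (0 : ℝ × ℝ)
    have e1 : ∀ᶠ x : ℝ in nhds 0, |x| < ε := by
      have := eventually_abs_sub_lt (0:ℝ) hεpos
      simpa using this
    exact (t1.eventually e1).and (t2.eventually e1)
  filter_upwards [hev] with p hp
  obtain ⟨hp1, hp2⟩ := hp
  set x := p.1
  set y := p.2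
  have hxy : |x + y| ≤ δ₁ := by
    have := abs_add_le x y
    have hε1 : ε ≤ δ₁ / 2 := min_le_left _ _
    linarith
  have hy : |y| ≤ δ₂ := by
    have : ε ≤ δ₂ := le_trans (min_le_right _ _) (min_le_left _ _)
    linarith
  have hx : |x| ≤ δ₃ := by
    have : ε ≤ δ₃ := le_trans (min_le_right _ _) (min_le_right _ _)
    linarith
  have bA := hA (x + y) hxy
  have bB := hB y hy
  have bC := hC x hx
  have hcb := cube_bound x y
  rw [hid x y]
  rw [Real.norm_eq_abs, Real.norm_eq_abs, abs_of_nonneg (by positivity :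
    (0:ℝ) ≤ |x| ^ 3 + |y| ^ 3)]
  set A := lob (3 * π / 4 + (x + y)) - lob (3 * π / 4) + Real.log 2 / 2 * (x + y)
    + (-1) * (x + y) ^ 2 / 2 with hAdef
  set B := lob (π / 4 + y) - lob (π / 4) + Real.log 2 / 2 * y + 1 * y ^ 2 / 2 with hBdef
  set C := lob (π / 2 + x) - lob (π / 2) + Real.log 2 * x + 0 * x ^ 2 / 2 with hCdef
  have tri : |-2 * A + 2 * B + C| ≤ 2 * |A| + 2 * |B| + |C| := by
    calc |-2 * A + 2 * B + C| ≤ |-2 * A + 2 * B| + |C| := abs_add_le _ _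
      _ ≤ |-2 * A| + |2 * B| + |C| := by linarith [abs_add_le (-2 * A) (2 * B)]
      _ = 2 * |A| + 2 * |B| + |C| := by rw [abs_mul, abs_mul]; norm_num
  have hA3 : |A| ≤ K₁ * |x + y| ^ 3 := bA
  have hB3 : |B| ≤ K₂ * |y| ^ 3 := bB
  have hC3 : |C| ≤ K₃ * |x| ^ 3 := bC
  have h1 : K₁ * |x + y| ^ 3 ≤ K₁ * (4 * (|x| ^ 3 + |y| ^ 3)) :=
    mul_le_mul_of_nonneg_left hcb hK₁
  nlinarith [abs_nonneg x, abs_nonneg y, pow_nonneg (abs_nonneg x) 3,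
    pow_nonneg (abs_nonneg y) 3, mul_nonneg hK₂ (pow_nonneg (abs_nonneg y) 3),
    mul_nonneg hK₃ (pow_nonneg (abs_nonneg x) 3)]
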